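/- The only injective affine map f : ℝ² → ℝ² with f(K) = K is the identity. -/

import Mathlib

open Set Complex

/-- `K` is the attractor (invariant nonempty compact set) of the system `S`. -/
def IsAttractor {X : Type*} [MetricSpace X] {m : ℕ} (S : Fin m → X → X) (K : Set X) : Prop :=
  K.Nonempty ∧ IsCompact K ∧ K = ⋃ i, S i '' K

/-- The five similarities of the main example, in the plane `ℝ² ≃ ℂ`:
`S₂ x = x/2 + (2,0)`, `S_k x = x/4 + a_k` for `a₁=(0,0)`, `a₃=(3,0)`,
`a₄=(1,√3)`, `a₅=(3/2, 3√3/2)`. -/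
noncomputable def mainS : Fin 5 → ℂ → ℂ :=
  ![fun w => w / 4,
    fun w => w / 2 + 2,
    fun w => w / 4 + 3,
    fun w => w / 4 + (1 + Real.sqrt 3 * Complex.I),
    fun w => w / 4 + (3 / 2 + (3 * Real.sqrt 3 / 2) * Complex.I)]

/-- The closed triangle with vertices `A=(0,0)`, `B=(2,2√3)`, `C=(4,0)`. -/
noncomputable def tri : Set ℂ :=
  convexHull ℝ {0, 2 + 2 * Real.sqrt 3 * Complex.I, 4}
namespace Stmt16Aux

lemma s3pos : (0:ℝ) < Real.sqrt 3 := by positivity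
lemma s3sq : Real.sqrt 3 * Real.sqrt 3 = 3 := Real.mul_self_sqrt (by norm_num)

/-- the filled triangle as intersection of half-planes -/
def Hs : Set ℂ :=
  {z | 0 ≤ z.im ∧ z.im ≤ Real.sqrt 3 * z.re ∧ z.im ≤ Real.sqrt 3 * (4 - z.re)}

noncomputable def Bv : ℂ := 2 + 2 * Real.sqrt 3 * Complex.I

lemma Bv_re : Bv.re = 2 := by simp [Bv]
lemma Bv_im : Bv.im = 2 * Real.sqrt 3 := by simp [Bv]

lemma mainS0 (z : ℂ) : mainS 0 z = z / 4 := by simp [mainS]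
lemma mainS1 (z : ℂ) : mainS 1 z = z / 2 + 2 := by simp [mainS]
lemma mainS2 (z : ℂ) : mainS 2 z = z / 4 + 3 := by simp [mainS]
lemma mainS3 (z : ℂ) : mainS 3 z = z / 4 + (1 + Real.sqrt 3 * Complex.I) := by simp [mainS]
lemma mainS4 (z : ℂ) : mainS 4 z = z / 4 + (3 / 2 + (3 * Real.sqrt 3 / 2) * Complex.I) := by
  simp [mainS]

lemma Hs_closed : IsClosed Hs := by
  have h1 : IsClosed {z : ℂ | 0 ≤ z.im} :=
    isClosed_le continuous_const Complex.continuous_im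
  have h2 : IsClosed {z : ℂ | z.im ≤ Real.sqrt 3 * z.re} :=
    isClosed_le Complex.continuous_im (continuous_const.mul Complex.continuous_re)
  have h3 : IsClosed {z : ℂ | z.im ≤ Real.sqrt 3 * (4 - z.re)} :=
    isClosed_le Complex.continuous_im
      (continuous_const.mul (continuous_const.sub Complex.continuous_re))
  exact (h1.inter (h2.inter h3))

lemma Hs_convex : Convex ℝ Hs := by
  intro x hx y hy a b ha hb hab
  obtain ⟨hx1, hx2, hx3⟩ := hx
  obtain ⟨hy1, hy2, hy3⟩ := hy
  refine ⟨?_, ?_, ?_⟩ <;>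
    simp only [Complex.add_im, Complex.add_re, Complex.smul_im, Complex.smul_re,
      smul_eq_mul] <;> nlinarith

lemma Hs_inv (i : Fin 5) : Set.MapsTo (mainS i) Hs Hs := by
  intro z hz
  obtain ⟨h1, h2, h3⟩ := hz
  have hs3 := s3pos
  fin_cases i
  · show mainS 0 z ∈ Hs; rw [mainS0]; refine ⟨?_, ?_, ?_⟩ <;> simp <;> nlinarith
  · show mainS 1 z ∈ Hs; rw [mainS1]; refine ⟨?_, ?_, ?_⟩ <;> simp <;> nlinarith
  · show mainS 2 z ∈ Hs; rw [mainS2]; refine ⟨?_, ?_, ?_⟩ <;> simp <;> nlinarith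
  · show mainS 3 z ∈ Hs; rw [mainS3]; refine ⟨?_, ?_, ?_⟩ <;> simp <;> nlinarith
  · show mainS 4 z ∈ Hs; rw [mainS4]; refine ⟨?_, ?_, ?_⟩ <;> simp <;> nlinarith

lemma contract (i : Fin 5) (x y : ℂ) :
    dist (mainS i x) (mainS i y) ≤ (1/2) * dist x y := by
  have hnn : (0:ℝ) ≤ ‖x - y‖ := by positivity
  have key4 : ∀ a : ℂ, dist (x/4 + a) (y/4 + a) ≤ (1/2) * dist x y := by
    intro a
    rw [Complex.dist_eq, Complex.dist_eq,
      show x/4 + a - (y/4 + a) = (x - y)/4 by ring, norm_div]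
    simp
    nlinarith
  have key2 : ∀ a : ℂ, dist (x/2 + a) (y/2 + a) ≤ (1/2) * dist x y := by
    intro a
    rw [Complex.dist_eq, Complex.dist_eq,
      show x/2 + a - (y/2 + a) = (x - y)/2 by ring, norm_div]
    simp
    nlinarith
  fin_cases i
  · show dist (mainS 0 x) (mainS 0 y) ≤ _
    rw [mainS0, mainS0]
    simpa using key4 0
  · show dist (mainS 1 x) (mainS 1 y) ≤ _
    rw [mainS1, mainS1]; exact key2 2
  · show dist (mainS 2 x) (mainS 2 y) ≤ _
    rw [mainS2, mainS2]; exact key4 3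
  · show dist (mainS 3 x) (mainS 3 y) ≤ _
    rw [mainS3, mainS3]; exact key4 _
  · show dist (mainS 4 x) (mainS 4 y) ≤ _
    rw [mainS4, mainS4]; exact key4 _

section
variable {K : Set ℂ} (hne : K.Nonempty) (hcomp : IsCompact K)
  (heq : K = ⋃ i, mainS i '' K)

include heq in
lemma SK_mem : ∀ i : Fin 5, ∀ x ∈ K, mainS i x ∈ K := by
  intro i x hx
  rw [heq]
  exact Set.mem_iUnion.2 ⟨i, ⟨x, hx, rfl⟩⟩

include hne hcomp heq in
lemma K_sub_Hs : K ⊆ Hs := by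
  have hHne : Hs.Nonempty := ⟨0, by refine ⟨?_, ?_, ?_⟩ <;> simp <;> positivity⟩
  have hcont : Continuous fun x : ℂ => Metric.infDist x Hs :=
    Metric.continuous_infDist_pt Hs
  obtain ⟨x₀, hx₀K, hmax'⟩ := hcomp.exists_isMaxOn hne hcont.continuousOn
  have hmax : ∀ y ∈ K, Metric.infDist y Hs ≤ Metric.infDist x₀ Hs := fun y hy => hmax' hy
  have hm0 : Metric.infDist x₀ Hs ≤ 0 := by
    have hx₀ : x₀ ∈ ⋃ i, mainS i '' K := heq ▸ hx₀K
    obtain ⟨i, y, hyK, hyx⟩ := by simpa using hx₀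
    obtain ⟨h, hhH, hhd⟩ := Hs_closed.exists_infDist_eq_dist hHne y
    have h1 : Metric.infDist x₀ Hs ≤ dist x₀ (mainS i h) :=
      Metric.infDist_le_dist_of_mem (Hs_inv i hhH)
    have h2 : dist x₀ (mainS i h) ≤ (1/2) * dist y h := by
      rw [← hyx]; exact contract i y h
    have h3 : Metric.infDist y Hs ≤ Metric.infDist x₀ Hs := hmax y hyK
    rw [hhd] at h3
    linarith
  intro x hxK
  have h4 : Metric.infDist x Hs ≤ 0 := le_trans (hmax x hxK) hm0
  have h5 : Metric.infDist x Hs = 0 :=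
    le_antisymm h4 Metric.infDist_nonneg
  exact (Hs_closed.mem_iff_infDist_zero hHne).2 h5

include hne hcomp heq in
lemma fix_mem (i : Fin 5) (p : ℂ) (hp : mainS i p = p) : p ∈ K := by
  obtain ⟨y, hyK⟩ := hne
  have hiter : ∀ n : ℕ, (mainS i)^[n] y ∈ K := by
    intro n
    induction n with
    | zero => simpa using hyK
    | succ n ih => rw [Function.iterate_succ_apply']; exact SK_mem heq i _ ih
  have hdist : ∀ n : ℕ, dist ((mainS i)^[n] y) p ≤ (1/2)^n * dist y p := by
    intro n
    induction n with
    | zero => simp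
    | succ n ih =>
      rw [Function.iterate_succ_apply']
      calc dist (mainS i ((mainS i)^[n] y)) p = dist (mainS i ((mainS i)^[n] y)) (mainS i p) := by
            rw [hp]
        _ ≤ (1/2) * dist ((mainS i)^[n] y) p := contract i _ _
        _ ≤ (1/2) * ((1/2)^n * dist y p) := by linarith
        _ = (1/2)^(n+1) * dist y p := by ring
  have hclosed : IsClosed K := hcomp.isClosed
  rw [← hclosed.closure_eq]
  rw [Metric.mem_closure_iff]
  intro ε hε
  rcases eq_or_lt_of_le (dist_nonneg (x := y) (y := p)) with hd | hd
  · exact ⟨y, hyK, by rw [dist_comm, ← hd]; exact hε⟩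
  · obtain ⟨n, hn⟩ := exists_pow_lt_of_lt_one (div_pos hε hd) (by norm_num : (1:ℝ)/2 < 1)
    refine ⟨(mainS i)^[n] y, hiter n, ?_⟩
    rw [dist_comm]
    calc dist ((mainS i)^[n] y) p ≤ (1/2)^n * dist y p := hdist n
      _ < (ε / dist y p) * dist y p := by
          apply mul_lt_mul_of_pos_right hn hd
      _ = ε := by field_simp

include hne hcomp heq in
lemma zero_mem : (0:ℂ) ∈ K := by
  apply fix_mem hne hcomp heq 0
  rw [mainS0]; norm_num

include hne hcomp heq in
lemma four_mem : (4:ℂ) ∈ K := by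
  apply fix_mem hne hcomp heq 1
  rw [mainS1]; ring

include hne hcomp heq in
lemma Bv_mem : Bv ∈ K := by
  apply fix_mem hne hcomp heq 4
  rw [mainS4, Bv]; ring

include hne hcomp heq in
lemma q1_not_mem : (9/4 + (5/4)*Real.sqrt 3*Complex.I : ℂ) ∉ K := by
  intro hq
  rw [heq] at hq
  obtain ⟨i, hi⟩ := Set.mem_iUnion.1 hq
  obtain ⟨y, hyK, hy⟩ := hi
  have hyH := K_sub_Hs hne hcomp heq hyK
  have hs3 := s3pos
  fin_cases i
  · replace hy : mainS 0 y = (9/4 + (5/4)*Real.sqrt 3*Complex.I : ℂ) := hy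
    rw [mainS0] at hy
    have hy' : y = (9 + 5*Real.sqrt 3*Complex.I : ℂ) := by linear_combination (4:ℂ)*hy
    rw [hy'] at hyH
    obtain ⟨c1, c2, c3⟩ := hyH
    simp only [Complex.add_im, Complex.add_re, Complex.sub_im, Complex.sub_re,
      Complex.mul_im, Complex.mul_re, Complex.I_re, Complex.I_im,
      Complex.ofReal_re, Complex.ofReal_im, Complex.re_ofNat, Complex.im_ofNat,
      Complex.one_re, Complex.one_im, Complex.zero_re, Complex.zero_im,
      Complex.neg_re, Complex.neg_im, Complex.div_ofNat_re, Complex.div_ofNat_im] at c1 c2 c3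
    try norm_num at c1 c2 c3 ⊢
    try nlinarith [s3pos]
  · replace hy : mainS 1 y = (9/4 + (5/4)*Real.sqrt 3*Complex.I : ℂ) := hy
    rw [mainS1] at hy
    have hy' : y = (1/2 + (5/2)*Real.sqrt 3*Complex.I : ℂ) := by linear_combination (2:ℂ)*hy
    rw [hy'] at hyH
    obtain ⟨c1, c2, c3⟩ := hyH
    simp only [Complex.add_im, Complex.add_re, Complex.sub_im, Complex.sub_re,
      Complex.mul_im, Complex.mul_re, Complex.I_re, Complex.I_im,
      Complex.ofReal_re, Complex.ofReal_im, Complex.re_ofNat, Complex.im_ofNat,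
      Complex.one_re, Complex.one_im, Complex.zero_re, Complex.zero_im,
      Complex.neg_re, Complex.neg_im, Complex.div_ofNat_re, Complex.div_ofNat_im] at c1 c2 c3
    try norm_num at c1 c2 c3 ⊢
    try nlinarith [s3pos]
  · replace hy : mainS 2 y = (9/4 + (5/4)*Real.sqrt 3*Complex.I : ℂ) := hy
    rw [mainS2] at hy
    have hy' : y = (-3 + 5*Real.sqrt 3*Complex.I : ℂ) := by linear_combination (4:ℂ)*hy
    rw [hy'] at hyH
    obtain ⟨c1, c2, c3⟩ := hyH
    simp only [Complex.add_im, Complex.add_re, Complex.sub_im, Complex.sub_re,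
      Complex.mul_im, Complex.mul_re, Complex.I_re, Complex.I_im,
      Complex.ofReal_re, Complex.ofReal_im, Complex.re_ofNat, Complex.im_ofNat,
      Complex.one_re, Complex.one_im, Complex.zero_re, Complex.zero_im,
      Complex.neg_re, Complex.neg_im, Complex.div_ofNat_re, Complex.div_ofNat_im] at c1 c2 c3
    try norm_num at c1 c2 c3 ⊢
    try nlinarith [s3pos]
  · replace hy : mainS 3 y = (9/4 + (5/4)*Real.sqrt 3*Complex.I : ℂ) := hy
    rw [mainS3] at hy
    have hy' : y = (5 + Real.sqrt 3*Complex.I : ℂ) := by linear_combination (4:ℂ)*hy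
    rw [hy'] at hyH
    obtain ⟨c1, c2, c3⟩ := hyH
    simp only [Complex.add_im, Complex.add_re, Complex.sub_im, Complex.sub_re,
      Complex.mul_im, Complex.mul_re, Complex.I_re, Complex.I_im,
      Complex.ofReal_re, Complex.ofReal_im, Complex.re_ofNat, Complex.im_ofNat,
      Complex.one_re, Complex.one_im, Complex.zero_re, Complex.zero_im,
      Complex.neg_re, Complex.neg_im, Complex.div_ofNat_re, Complex.div_ofNat_im] at c1 c2 c3
    try norm_num at c1 c2 c3 ⊢
    try nlinarith [s3pos]
  · replace hy : mainS 4 y = (9/4 + (5/4)*Real.sqrt 3*Complex.I : ℂ) := hy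
    rw [mainS4] at hy
    have hy' : y = (3 - Real.sqrt 3*Complex.I : ℂ) := by linear_combination (4:ℂ)*hy
    rw [hy'] at hyH
    obtain ⟨c1, c2, c3⟩ := hyH
    simp only [Complex.add_im, Complex.add_re, Complex.sub_im, Complex.sub_re,
      Complex.mul_im, Complex.mul_re, Complex.I_re, Complex.I_im,
      Complex.ofReal_re, Complex.ofReal_im, Complex.re_ofNat, Complex.im_ofNat,
      Complex.one_re, Complex.one_im, Complex.zero_re, Complex.zero_im,
      Complex.neg_re, Complex.neg_im, Complex.div_ofNat_re, Complex.div_ofNat_im] at c1 c2 c3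
    try norm_num at c1 c2 c3 ⊢
    try nlinarith [s3pos]

include hne hcomp heq in
lemma q2_not_mem : (3/2 + (1/2)*Real.sqrt 3*Complex.I : ℂ) ∉ K := by
  intro hq
  rw [heq] at hq
  obtain ⟨i, hi⟩ := Set.mem_iUnion.1 hq
  obtain ⟨y, hyK, hy⟩ := hi
  have hyH := K_sub_Hs hne hcomp heq hyK
  have hs3 := s3pos
  fin_cases i
  · replace hy : mainS 0 y = (3/2 + (1/2)*Real.sqrt 3*Complex.I : ℂ) := hy
    rw [mainS0] at hy
    have hy' : y = (6 + 2*Real.sqrt 3*Complex.I : ℂ) := by linear_combination (4:ℂ)*hy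
    rw [hy'] at hyH
    obtain ⟨c1, c2, c3⟩ := hyH
    simp only [Complex.add_im, Complex.add_re, Complex.sub_im, Complex.sub_re,
      Complex.mul_im, Complex.mul_re, Complex.I_re, Complex.I_im,
      Complex.ofReal_re, Complex.ofReal_im, Complex.re_ofNat, Complex.im_ofNat,
      Complex.one_re, Complex.one_im, Complex.zero_re, Complex.zero_im,
      Complex.neg_re, Complex.neg_im, Complex.div_ofNat_re, Complex.div_ofNat_im] at c1 c2 c3
    try norm_num at c1 c2 c3 ⊢
    try nlinarith [s3pos]
  · replace hy : mainS 1 y = (3/2 + (1/2)*Real.sqrt 3*Complex.I : ℂ) := hy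
    rw [mainS1] at hy
    have hy' : y = (-1 + Real.sqrt 3*Complex.I : ℂ) := by linear_combination (2:ℂ)*hy
    rw [hy'] at hyH
    obtain ⟨c1, c2, c3⟩ := hyH
    simp only [Complex.add_im, Complex.add_re, Complex.sub_im, Complex.sub_re,
      Complex.mul_im, Complex.mul_re, Complex.I_re, Complex.I_im,
      Complex.ofReal_re, Complex.ofReal_im, Complex.re_ofNat, Complex.im_ofNat,
      Complex.one_re, Complex.one_im, Complex.zero_re, Complex.zero_im,
      Complex.neg_re, Complex.neg_im, Complex.div_ofNat_re, Complex.div_ofNat_im] at c1 c2 c3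
    try norm_num at c1 c2 c3 ⊢
    try nlinarith [s3pos]
  · replace hy : mainS 2 y = (3/2 + (1/2)*Real.sqrt 3*Complex.I : ℂ) := hy
    rw [mainS2] at hy
    have hy' : y = (-6 + 2*Real.sqrt 3*Complex.I : ℂ) := by linear_combination (4:ℂ)*hy
    rw [hy'] at hyH
    obtain ⟨c1, c2, c3⟩ := hyH
    simp only [Complex.add_im, Complex.add_re, Complex.sub_im, Complex.sub_re,
      Complex.mul_im, Complex.mul_re, Complex.I_re, Complex.I_im,
      Complex.ofReal_re, Complex.ofReal_im, Complex.re_ofNat, Complex.im_ofNat,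
      Complex.one_re, Complex.one_im, Complex.zero_re, Complex.zero_im,
      Complex.neg_re, Complex.neg_im, Complex.div_ofNat_re, Complex.div_ofNat_im] at c1 c2 c3
    try norm_num at c1 c2 c3 ⊢
    try nlinarith [s3pos]
  · replace hy : mainS 3 y = (3/2 + (1/2)*Real.sqrt 3*Complex.I : ℂ) := hy
    rw [mainS3] at hy
    have hy' : y = (2 - 2*Real.sqrt 3*Complex.I : ℂ) := by linear_combination (4:ℂ)*hy
    rw [hy'] at hyH
    obtain ⟨c1, c2, c3⟩ := hyH
    simp only [Complex.add_im, Complex.add_re, Complex.sub_im, Complex.sub_re,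
      Complex.mul_im, Complex.mul_re, Complex.I_re, Complex.I_im,
      Complex.ofReal_re, Complex.ofReal_im, Complex.re_ofNat, Complex.im_ofNat,
      Complex.one_re, Complex.one_im, Complex.zero_re, Complex.zero_im,
      Complex.neg_re, Complex.neg_im, Complex.div_ofNat_re, Complex.div_ofNat_im] at c1 c2 c3
    try norm_num at c1 c2 c3 ⊢
    try nlinarith [s3pos]
  · replace hy : mainS 4 y = (3/2 + (1/2)*Real.sqrt 3*Complex.I : ℂ) := hy
    rw [mainS4] at hy
    have hy' : y = (0 - 4*Real.sqrt 3*Complex.I : ℂ) := by linear_combination (4:ℂ)*hy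
    rw [hy'] at hyH
    obtain ⟨c1, c2, c3⟩ := hyH
    simp only [Complex.add_im, Complex.add_re, Complex.sub_im, Complex.sub_re,
      Complex.mul_im, Complex.mul_re, Complex.I_re, Complex.I_im,
      Complex.ofReal_re, Complex.ofReal_im, Complex.re_ofNat, Complex.im_ofNat,
      Complex.one_re, Complex.one_im, Complex.zero_re, Complex.zero_im,
      Complex.neg_re, Complex.neg_im, Complex.div_ofNat_re, Complex.div_ofNat_im] at c1 c2 c3
    try norm_num at c1 c2 c3 ⊢
    try nlinarith [s3pos]

include hne hcomp heq in
lemma q3_not_mem : (3/4 + (3/4)*Real.sqrt 3*Complex.I : ℂ) ∉ K := by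
  intro hq
  rw [heq] at hq
  obtain ⟨i, hi⟩ := Set.mem_iUnion.1 hq
  obtain ⟨y, hyK, hy⟩ := hi
  have hyH := K_sub_Hs hne hcomp heq hyK
  have hs3 := s3pos
  fin_cases i
  · replace hy : mainS 0 y = (3/4 + (3/4)*Real.sqrt 3*Complex.I : ℂ) := hy
    rw [mainS0] at hy
    have hy' : y = (3 + 3*Real.sqrt 3*Complex.I : ℂ) := by linear_combination (4:ℂ)*hy
    rw [hy'] at hyH
    obtain ⟨c1, c2, c3⟩ := hyH
    simp only [Complex.add_im, Complex.add_re, Complex.sub_im, Complex.sub_re,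
      Complex.mul_im, Complex.mul_re, Complex.I_re, Complex.I_im,
      Complex.ofReal_re, Complex.ofReal_im, Complex.re_ofNat, Complex.im_ofNat,
      Complex.one_re, Complex.one_im, Complex.zero_re, Complex.zero_im,
      Complex.neg_re, Complex.neg_im, Complex.div_ofNat_re, Complex.div_ofNat_im] at c1 c2 c3
    try norm_num at c1 c2 c3 ⊢
    try nlinarith [s3pos]
  · replace hy : mainS 1 y = (3/4 + (3/4)*Real.sqrt 3*Complex.I : ℂ) := hy
    rw [mainS1] at hy
    have hy' : y = (-5/2 + (3/2)*Real.sqrt 3*Complex.I : ℂ) := by linear_combination (2:ℂ)*hy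
    rw [hy'] at hyH
    obtain ⟨c1, c2, c3⟩ := hyH
    simp only [Complex.add_im, Complex.add_re, Complex.sub_im, Complex.sub_re,
      Complex.mul_im, Complex.mul_re, Complex.I_re, Complex.I_im,
      Complex.ofReal_re, Complex.ofReal_im, Complex.re_ofNat, Complex.im_ofNat,
      Complex.one_re, Complex.one_im, Complex.zero_re, Complex.zero_im,
      Complex.neg_re, Complex.neg_im, Complex.div_ofNat_re, Complex.div_ofNat_im] at c1 c2 c3
    try norm_num at c1 c2 c3 ⊢
    try nlinarith [s3pos]
  · replace hy : mainS 2 y = (3/4 + (3/4)*Real.sqrt 3*Complex.I : ℂ) := hy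
    rw [mainS2] at hy
    have hy' : y = (-9 + 3*Real.sqrt 3*Complex.I : ℂ) := by linear_combination (4:ℂ)*hy
    rw [hy'] at hyH
    obtain ⟨c1, c2, c3⟩ := hyH
    simp only [Complex.add_im, Complex.add_re, Complex.sub_im, Complex.sub_re,
      Complex.mul_im, Complex.mul_re, Complex.I_re, Complex.I_im,
      Complex.ofReal_re, Complex.ofReal_im, Complex.re_ofNat, Complex.im_ofNat,
      Complex.one_re, Complex.one_im, Complex.zero_re, Complex.zero_im,
      Complex.neg_re, Complex.neg_im, Complex.div_ofNat_re, Complex.div_ofNat_im] at c1 c2 c3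
    try norm_num at c1 c2 c3 ⊢
    try nlinarith [s3pos]
  · replace hy : mainS 3 y = (3/4 + (3/4)*Real.sqrt 3*Complex.I : ℂ) := hy
    rw [mainS3] at hy
    have hy' : y = (-1 - Real.sqrt 3*Complex.I : ℂ) := by linear_combination (4:ℂ)*hy
    rw [hy'] at hyH
    obtain ⟨c1, c2, c3⟩ := hyH
    simp only [Complex.add_im, Complex.add_re, Complex.sub_im, Complex.sub_re,
      Complex.mul_im, Complex.mul_re, Complex.I_re, Complex.I_im,
      Complex.ofReal_re, Complex.ofReal_im, Complex.re_ofNat, Complex.im_ofNat,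
      Complex.one_re, Complex.one_im, Complex.zero_re, Complex.zero_im,
      Complex.neg_re, Complex.neg_im, Complex.div_ofNat_re, Complex.div_ofNat_im] at c1 c2 c3
    try norm_num at c1 c2 c3 ⊢
    try nlinarith [s3pos]
  · replace hy : mainS 4 y = (3/4 + (3/4)*Real.sqrt 3*Complex.I : ℂ) := hy
    rw [mainS4] at hy
    have hy' : y = (-3 - 3*Real.sqrt 3*Complex.I : ℂ) := by linear_combination (4:ℂ)*hy
    rw [hy'] at hyH
    obtain ⟨c1, c2, c3⟩ := hyH
    simp only [Complex.add_im, Complex.add_re, Complex.sub_im, Complex.sub_re,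
      Complex.mul_im, Complex.mul_re, Complex.I_re, Complex.I_im,
      Complex.ofReal_re, Complex.ofReal_im, Complex.re_ofNat, Complex.im_ofNat,
      Complex.one_re, Complex.one_im, Complex.zero_re, Complex.zero_im,
      Complex.neg_re, Complex.neg_im, Complex.div_ofNat_re, Complex.div_ofNat_im] at c1 c2 c3
    try norm_num at c1 c2 c3 ⊢
    try nlinarith [s3pos]

include hne hcomp heq in
lemma q4_not_mem : (3/2 : ℂ) ∉ K := by
  intro hq
  rw [heq] at hq
  obtain ⟨i, hi⟩ := Set.mem_iUnion.1 hq
  obtain ⟨y, hyK, hy⟩ := hi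
  have hyH := K_sub_Hs hne hcomp heq hyK
  have hs3 := s3pos
  fin_cases i
  · replace hy : mainS 0 y = (3/2 : ℂ) := hy
    rw [mainS0] at hy
    have hy' : y = (6 : ℂ) := by linear_combination (4:ℂ)*hy
    rw [hy'] at hyH
    obtain ⟨c1, c2, c3⟩ := hyH
    simp only [Complex.add_im, Complex.add_re, Complex.sub_im, Complex.sub_re,
      Complex.mul_im, Complex.mul_re, Complex.I_re, Complex.I_im,
      Complex.ofReal_re, Complex.ofReal_im, Complex.re_ofNat, Complex.im_ofNat,
      Complex.one_re, Complex.one_im, Complex.zero_re, Complex.zero_im,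
      Complex.neg_re, Complex.neg_im, Complex.div_ofNat_re, Complex.div_ofNat_im] at c1 c2 c3
    try norm_num at c1 c2 c3 ⊢
    try nlinarith [s3pos]
  · replace hy : mainS 1 y = (3/2 : ℂ) := hy
    rw [mainS1] at hy
    have hy' : y = (-1 : ℂ) := by linear_combination (2:ℂ)*hy
    rw [hy'] at hyH
    obtain ⟨c1, c2, c3⟩ := hyH
    simp only [Complex.add_im, Complex.add_re, Complex.sub_im, Complex.sub_re,
      Complex.mul_im, Complex.mul_re, Complex.I_re, Complex.I_im,
      Complex.ofReal_re, Complex.ofReal_im, Complex.re_ofNat, Complex.im_ofNat,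
      Complex.one_re, Complex.one_im, Complex.zero_re, Complex.zero_im,
      Complex.neg_re, Complex.neg_im, Complex.div_ofNat_re, Complex.div_ofNat_im] at c1 c2 c3
    try norm_num at c1 c2 c3 ⊢
    try nlinarith [s3pos]
  · replace hy : mainS 2 y = (3/2 : ℂ) := hy
    rw [mainS2] at hy
    have hy' : y = (-6 : ℂ) := by linear_combination (4:ℂ)*hy
    rw [hy'] at hyH
    obtain ⟨c1, c2, c3⟩ := hyH
    simp only [Complex.add_im, Complex.add_re, Complex.sub_im, Complex.sub_re,
      Complex.mul_im, Complex.mul_re, Complex.I_re, Complex.I_im,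
      Complex.ofReal_re, Complex.ofReal_im, Complex.re_ofNat, Complex.im_ofNat,
      Complex.one_re, Complex.one_im, Complex.zero_re, Complex.zero_im,
      Complex.neg_re, Complex.neg_im, Complex.div_ofNat_re, Complex.div_ofNat_im] at c1 c2 c3
    try norm_num at c1 c2 c3 ⊢
    try nlinarith [s3pos]
  · replace hy : mainS 3 y = (3/2 : ℂ) := hy
    rw [mainS3] at hy
    have hy' : y = (2 - 4*Real.sqrt 3*Complex.I : ℂ) := by linear_combination (4:ℂ)*hy
    rw [hy'] at hyH
    obtain ⟨c1, c2, c3⟩ := hyH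
    simp only [Complex.add_im, Complex.add_re, Complex.sub_im, Complex.sub_re,
      Complex.mul_im, Complex.mul_re, Complex.I_re, Complex.I_im,
      Complex.ofReal_re, Complex.ofReal_im, Complex.re_ofNat, Complex.im_ofNat,
      Complex.one_re, Complex.one_im, Complex.zero_re, Complex.zero_im,
      Complex.neg_re, Complex.neg_im, Complex.div_ofNat_re, Complex.div_ofNat_im] at c1 c2 c3
    try norm_num at c1 c2 c3 ⊢
    try nlinarith [s3pos]
  · replace hy : mainS 4 y = (3/2 : ℂ) := hy
    rw [mainS4] at hy
    have hy' : y = (0 - 6*Real.sqrt 3*Complex.I : ℂ) := by linear_combination (4:ℂ)*hy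
    rw [hy'] at hyH
    obtain ⟨c1, c2, c3⟩ := hyH
    simp only [Complex.add_im, Complex.add_re, Complex.sub_im, Complex.sub_re,
      Complex.mul_im, Complex.mul_re, Complex.I_re, Complex.I_im,
      Complex.ofReal_re, Complex.ofReal_im, Complex.re_ofNat, Complex.im_ofNat,
      Complex.one_re, Complex.one_im, Complex.zero_re, Complex.zero_im,
      Complex.neg_re, Complex.neg_im, Complex.div_ofNat_re, Complex.div_ofNat_im] at c1 c2 c3
    try norm_num at c1 c2 c3 ⊢
    try nlinarith [s3pos]

lemma mid_eq (u w : ℂ) : midpoint ℝ u w = (u + w) / 2 := by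
  rw [midpoint_eq_smul_add]
  rw [show ((⅟2 : ℝ)) = (1/2 : ℝ) by norm_num, Complex.real_smul]
  push_cast
  ring

lemma rep (z : ℂ) :
    z = ((z.re - z.im/Real.sqrt 3)/4) • (4:ℂ) + (z.im/(2*Real.sqrt 3)) • Bv := by
  have hp : (0:ℝ) < Real.sqrt 3 := s3pos
  rw [Bv]
  apply Complex.ext <;>
    simp only [Complex.add_re, Complex.smul_re, Complex.add_im, Complex.smul_im] <;>
    simp <;> field_simp <;> ring

include hne hcomp heq in
lemma comb_mem (α β γ : ℝ) (ha : 0 ≤ α) (hb : 0 ≤ β) (hc : 0 ≤ γ) (hs : α + β + γ = 1) :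
    α • (0:ℂ) + β • Bv + γ • (4:ℂ) ∈ convexHull ℝ K := by
  have h := Finset.centerMass_mem_convexHull (t := (Finset.univ : Finset (Fin 3)))
    (w := ![α, β, γ]) (z := ![(0:ℂ), Bv, 4]) (s := K)
    (by intro i _; fin_cases i <;> simpa)
    (by simp [Fin.sum_univ_three, hs])
    (by intro i _; fin_cases i <;>
        simp [zero_mem hne hcomp heq, Bv_mem hne hcomp heq, four_mem hne hcomp heq])
  convert h using 1
  simp [Finset.centerMass, Fin.sum_univ_three, hs]

include hne hcomp heq in
lemma not_ext (v : ℂ) (hv : v ∈ Hs) (h0 : v ≠ 0) (hB : v ≠ Bv) (h4 : v ≠ 4) :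
    ∃ u ∈ convexHull ℝ K, ∃ w ∈ convexHull ℝ K, u + w = 2*v ∧ u ≠ w := by
  obtain ⟨c1, c2, c3⟩ := hv
  have hp : (0:ℝ) < Real.sqrt 3 := s3pos
  have hsq := s3sq
  set β : ℝ := v.im/(2*Real.sqrt 3) with hβ
  set γ : ℝ := (v.re - v.im/Real.sqrt 3)/4 with hγ
  set α : ℝ := 1 - β - γ with hα
  have hβ' : 4*Real.sqrt 3 * β = 2*v.im := by rw [hβ]; field_simp; ring
  have hγ' : 4*Real.sqrt 3 * γ = Real.sqrt 3 * v.re - v.im := by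
    rw [hγ]; field_simp
  have hα' : 4*Real.sqrt 3 * α = 4*Real.sqrt 3 - Real.sqrt 3 * v.re - v.im := by
    rw [hα]; nlinarith [hβ', hγ']
  have hbnn : 0 ≤ β := by positivity
  have hcnn : 0 ≤ γ := by nlinarith
  have hann : 0 ≤ α := by nlinarith
  have hsum : α + β + γ = 1 := by rw [hα]; ring
  have hvc : α • (0:ℂ) + β • Bv + γ • (4:ℂ) = v := by
    rw [smul_zero, zero_add, add_comm]
    exact (rep v).symm
  -- which coefficients vanish
  rcases hbnn.eq_or_lt with hb0 | hbp
  · rcases hcnn.eq_or_lt with hc0 | hcp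
    · exfalso; apply h0
      rw [← hvc, ← hb0, ← hc0]; simp
    · rcases hann.eq_or_lt with ha0 | hap
      · exfalso; apply h4
        have : γ = 1 := by rw [hα] at ha0; linarith [hb0]
        rw [← hvc, ← hb0, this]; simp
      · -- α, γ > 0 : direction 4 - 0
        set t := min α γ with ht
        have htp : 0 < t := lt_min hap hcp
        have htα : t ≤ α := min_le_left _ _
        have htγ : t ≤ γ := min_le_right _ _
        refine ⟨(α - t) • (0:ℂ) + β • Bv + (γ + t) • 4, ?_,
                (α + t) • (0:ℂ) + β • Bv + (γ - t) • 4, ?_, ?_, ?_⟩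
        · exact comb_mem hne hcomp heq _ _ _ (by linarith) hbnn (by linarith) (by linarith)
        · exact comb_mem hne hcomp heq _ _ _ (by linarith) hbnn (by linarith) (by linarith)
        · rw [← hvc]
          simp only [Complex.real_smul]
          push_cast
          ring
        · intro hc
          have := congrArg Complex.re hc
          simp only [Complex.add_re, Complex.smul_re, Complex.zero_re, Bv_re,
            Complex.re_ofNat, smul_eq_mul] at this
          nlinarith
  · -- β > 0
    rcases hcnn.eq_or_lt with hc0 | hcp
    · -- γ = 0, β > 0, need α > 0
      rcases hann.eq_or_lt with ha0 | hap
      · exfalso; apply hB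
        have : β = 1 := by rw [hα] at ha0; linarith [hc0]
        rw [← hvc, ← hc0, this]; simp
      · set t := min α β with ht
        have htp : 0 < t := lt_min hap hbp
        have htα : t ≤ α := min_le_left _ _
        have htβ : t ≤ β := min_le_right _ _
        refine ⟨(α - t) • (0:ℂ) + (β + t) • Bv + γ • 4, ?_,
                (α + t) • (0:ℂ) + (β - t) • Bv + γ • 4, ?_, ?_, ?_⟩
        · exact comb_mem hne hcomp heq _ _ _ (by linarith) (by linarith) hcnn (by linarith)
        · exact comb_mem hne hcomp heq _ _ _ (by linarith) (by linarith) hcnn (by linarith)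
        · rw [← hvc]
          simp only [Complex.real_smul]
          push_cast
          ring
        · intro hc
          have := congrArg Complex.im hc
          simp only [Complex.add_im, Complex.smul_im, Complex.zero_im, Bv_im,
            Complex.im_ofNat, smul_eq_mul] at this
          nlinarith
    · set t := min β γ with ht
      have htp : 0 < t := lt_min hbp hcp
      have htβ : t ≤ β := min_le_left _ _
      have htγ : t ≤ γ := min_le_right _ _
      refine ⟨α • (0:ℂ) + (β + t) • Bv + (γ - t) • 4, ?_,
              α • (0:ℂ) + (β - t) • Bv + (γ + t) • 4, ?_, ?_, ?_⟩
      · exact comb_mem hne hcomp heq _ _ _ hann (by linarith) (by linarith) (by linarith)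
      · exact comb_mem hne hcomp heq _ _ _ hann (by linarith) (by linarith) (by linarith)
      · rw [← hvc]
        simp only [Complex.real_smul]
        push_cast
        ring
      · intro hc
        have := congrArg Complex.im hc
        simp only [Complex.add_im, Complex.smul_im, Complex.zero_im, Bv_im,
          Complex.im_ofNat, smul_eq_mul] at this
        nlinarith

include hne hcomp heq in
lemma ext_vertex (p : ℂ) (hp : p = 0 ∨ p = Bv ∨ p = 4) :
    ∀ u ∈ convexHull ℝ K, ∀ w ∈ convexHull ℝ K, u + w = 2*p → u = w := by
  have hEH : convexHull ℝ K ⊆ Hs := convexHull_min (K_sub_Hs hne hcomp heq) Hs_convex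
  intro u hu w hw h
  obtain ⟨a1, a2, a3⟩ := hEH hu
  obtain ⟨b1, b2, b3⟩ := hEH hw
  have hp3 := s3pos
  have hsq := s3sq
  rcases hp with rfl | rfl | rfl
  · have him : u.im + w.im = 0 := by
      have := congrArg Complex.im h; simpa using this
    have hre : u.re + w.re = 0 := by
      have := congrArg Complex.re h; simpa using this
    have hui : u.im = 0 := by linarith
    have hwi : w.im = 0 := by linarith
    have hur : 0 ≤ u.re := by nlinarith
    have hwr : 0 ≤ w.re := by nlinarith
    apply Complex.ext <;> linarith
  · have him : u.im + w.im = 4*Real.sqrt 3 := by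
      have := congrArg Complex.im h; rw [Bv] at this; simp at this; linarith
    have hre : u.re + w.re = 4 := by
      have := congrArg Complex.re h; rw [Bv] at this; simp at this; linarith
    have hu2 : u.im ≤ 2*Real.sqrt 3 := by nlinarith
    have hw2 : w.im ≤ 2*Real.sqrt 3 := by nlinarith
    have hui : u.im = 2*Real.sqrt 3 := by linarith
    have hwi : w.im = 2*Real.sqrt 3 := by linarith
    have hur1 : 2 ≤ u.re := by nlinarith
    have hur2 : u.re ≤ 2 := by nlinarith
    have hwr1 : 2 ≤ w.re := by nlinarith
    have hwr2 : w.re ≤ 2 := by nlinarith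
    apply Complex.ext <;> linarith
  · have him : u.im + w.im = 0 := by
      have := congrArg Complex.im h; simpa using this
    have hre : u.re + w.re = 8 := by
      have := congrArg Complex.re h; simp at this; linarith
    have hur : u.re ≤ 4 := by nlinarith
    have hwr : w.re ≤ 4 := by nlinarith
    have hur4 : u.re = 4 := by linarith
    have hwr4 : w.re = 4 := by linarith
    have hui : u.im ≤ 0 := by nlinarith
    have hwi : w.im ≤ 0 := by nlinarith
    apply Complex.ext <;> linarith

end
end Stmt16Aux

open Stmt16Aux

/-- The only injective affine map of the plane with `f(K) = K` is the
identity. -/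
theorem stmt16 (K : Set ℂ) (hK : IsAttractor mainS K) :
    ∀ f : ℂ →ᵃ[ℝ] ℂ, Function.Injective f → f '' K = K → ⇑f = id := by
  obtain ⟨hne, hcomp, heq⟩ := hK
  intro f hinj hfK
  have hp3 := s3pos
  set E := convexHull ℝ K with hE
  have hfE : f '' E = E := by rw [hE, AffineMap.image_convexHull, hfK]
  have hKE : K ⊆ E := subset_convexHull ℝ K
  have hEH : E ⊆ Hs := convexHull_min (K_sub_Hs hne hcomp heq) Hs_convex
  have transfer : ∀ v : ℂ, (∀ u ∈ E, ∀ w ∈ E, u + w = 2*v → u = w) →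
      ∀ u ∈ E, ∀ w ∈ E, u + w = 2*(f v) → u = w := by
    intro v hv u hu w hw huw
    rw [← hfE] at hu hw
    obtain ⟨u', hu', rfl⟩ := hu
    obtain ⟨w', hw', rfl⟩ := hw
    have hm : f v = midpoint ℝ (f u') (f w') := by
      rw [mid_eq]; linear_combination -huw / 2
    rw [← AffineMap.map_midpoint] at hm
    have hv' := hinj hm
    have h2 : u' + w' = 2*v := by rw [hv', mid_eq]; ring
    rw [hv u' hu' w' hw' h2]
  have hvert : ∀ v : ℂ, v ∈ K → (v = 0 ∨ v = Bv ∨ v = 4) →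
      (f v = 0 ∨ f v = Bv ∨ f v = 4) := by
    intro v hvK hv3
    by_contra hc
    push_neg at hc
    obtain ⟨hc0, hcB, hc4⟩ := hc
    have hfvE : f v ∈ E := hfE ▸ ⟨v, hKE hvK, rfl⟩
    obtain ⟨u, hu, w, hw, huw, hne'⟩ :=
      not_ext hne hcomp heq (f v) (hEH hfvE) hc0 hcB hc4
    exact hne' (transfer v (ext_vertex hne hcomp heq v hv3) u hu w hw huw)
  have h0K := zero_mem hne hcomp heq
  have h4K := four_mem hne hcomp heq
  have hBK := Bv_mem hne hcomp heq
  have h0 := hvert 0 h0K (Or.inl rfl)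
  have hB := hvert Bv hBK (Or.inr (Or.inl rfl))
  have h4 := hvert 4 h4K (Or.inr (Or.inr rfl))
  have d0B : (0:ℂ) ≠ Bv := by
    intro h
    have h' := congrArg Complex.im h
    simp [Bv] at h'
    try nlinarith [hp3]
  have dB4 : Bv ≠ (4:ℂ) := by
    intro h
    have h' := congrArg Complex.im h
    simp [Bv] at h'
    try nlinarith [hp3]
  have d04 : (0:ℂ) ≠ 4 := by norm_num
  have hlin : ∀ s t : ℝ, f (s•(4:ℂ) + t•Bv) = f 0 + s•(f 4 - f 0) + t•(f Bv - f 0) := by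
    intro s t
    have hd : ∀ x : ℂ, f x = f.linear x + f 0 := by
      intro x
      conv_lhs => rw [f.decomp]
      simp
    have hl4 : f.linear 4 = f 4 - f 0 := by rw [hd 4]; ring
    have hlB : f.linear Bv = f Bv - f 0 := by rw [hd Bv]; ring
    rw [hd, map_add, map_smul, map_smul, hl4, hlB]
    abel
  have himg : ∀ p, p ∈ K → f p ∈ K := fun p hp => hfK ▸ ⟨p, hp, rfl⟩
  have hstep := SK_mem heq
  have hp2K : (2 + Real.sqrt 3*Complex.I : ℂ) ∈ K := by
    have h1 := hstep 3 4 h4K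
    rw [mainS3] at h1
    have e : (4:ℂ)/4 + (1 + Real.sqrt 3*Complex.I) = 2 + Real.sqrt 3*Complex.I := by
      push_cast; ring
    rwa [e] at h1
  have hp1K : (3 + (1/2)*Real.sqrt 3*Complex.I : ℂ) ∈ K := by
    have h1 := hstep 1 _ hp2K
    rw [mainS1] at h1
    have e : (2 + Real.sqrt 3*Complex.I : ℂ)/2 + 2 = 3 + (1/2)*Real.sqrt 3*Complex.I := by
      push_cast; ring
    rwa [e] at h1
  have hp3K : ((5/2 : ℂ)) ∈ K := by
    have h1 := hstep 0 4 h4K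
    rw [mainS0] at h1
    have h2 := hstep 1 _ h1
    rw [mainS1] at h2
    have e : ((4:ℂ)/4)/2 + 2 = 5/2 := by norm_num
    rwa [e] at h2
  have hrepe : ∀ s t : ℝ, ∀ z : ℂ, z = s•(4:ℂ) + t•Bv → f z = f 0 + s•(f 4 - f 0) + t•(f Bv - f 0) := by
    intro s t z hz
    rw [hz, hlin]
  rcases h0 with h0|h0|h0 <;> rcases hB with hB|hB|hB <;> rcases h4 with h4|h4|h4
  · exact absurd (hinj (h0.trans hB.symm)) d0B
  · exact absurd (hinj (h0.trans hB.symm)) d0B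
  · exact absurd (hinj (h0.trans hB.symm)) d0B
  · exact absurd (hinj (h0.trans h4.symm)) d04
  · exact absurd (hinj (hB.trans h4.symm)) dB4
  · funext z
    have hz := hlin ((z.re - z.im/Real.sqrt 3)/4) (z.im/(2*Real.sqrt 3))
    rw [← rep z] at hz
    rw [hz, h0, hB, h4]
    simp only [sub_zero, zero_add, id_eq]
    exact (rep z).symm
  · exact absurd (hinj (h0.trans h4.symm)) d04
  · exfalso
    have hpe : (3 + (1/2)*Real.sqrt 3*Complex.I : ℂ) = (5/8 : ℝ)•(4:ℂ) + (1/4 : ℝ)•Bv := by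
      rw [Bv]; simp only [Complex.real_smul]; push_cast; ring
    have hq : f (3 + (1/2)*Real.sqrt 3*Complex.I : ℂ) = (9/4 + (5/4)*Real.sqrt 3*Complex.I : ℂ) := by
      rw [hpe, hlin, h0, hB, h4, Bv]
      simp only [Complex.real_smul]; push_cast; ring
    exact q1_not_mem hne hcomp heq (hq ▸ himg _ hp1K)
  · exact absurd (hinj (hB.trans h4.symm)) dB4
  · exact absurd (hinj (hB.trans h4.symm)) dB4
  · exact absurd (hinj (h0.trans h4.symm)) d04
  · exfalso
    have hpe : (2 + Real.sqrt 3*Complex.I : ℂ) = (1/4 : ℝ)•(4:ℂ) + (1/2 : ℝ)•Bv := by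
      rw [Bv]; simp only [Complex.real_smul]; push_cast; ring
    have hq : f (2 + Real.sqrt 3*Complex.I : ℂ) = (3/2 + (1/2)*Real.sqrt 3*Complex.I : ℂ) := by
      rw [hpe, hlin, h0, hB, h4, Bv]
      simp only [Complex.real_smul]; push_cast; ring
    exact q2_not_mem hne hcomp heq (hq ▸ himg _ hp2K)
  · exact absurd (hinj (h0.trans hB.symm)) d0B
  · exact absurd (hinj (h0.trans hB.symm)) d0B
  · exact absurd (hinj (h0.trans hB.symm)) d0B
  · exfalso
    have hpe : ((5/2 : ℂ)) = (5/8 : ℝ)•(4:ℂ) + (0 : ℝ)•Bv := by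
      rw [Bv]; simp only [Complex.real_smul]; push_cast; ring
    have hq : f ((5/2 : ℂ)) = (3/4 + (3/4)*Real.sqrt 3*Complex.I : ℂ) := by
      rw [hpe, hlin, h0, hB, h4, Bv]
      simp only [Complex.real_smul]; push_cast; ring
    exact q3_not_mem hne hcomp heq (hq ▸ himg _ hp3K)
  · exact absurd (hinj (h0.trans h4.symm)) d04
  · exact absurd (hinj (hB.trans h4.symm)) dB4
  · exact absurd (hinj (hB.trans h4.symm)) dB4
  · exfalso
    have hpe : (2 + Real.sqrt 3*Complex.I : ℂ) = (1/4 : ℝ)•(4:ℂ) + (1/2 : ℝ)•Bv := by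
      rw [Bv]; simp only [Complex.real_smul]; push_cast; ring
    have hq : f (2 + Real.sqrt 3*Complex.I : ℂ) = (3/2 + (1/2)*Real.sqrt 3*Complex.I : ℂ) := by
      rw [hpe, hlin, h0, hB, h4, Bv]
      simp only [Complex.real_smul]; push_cast; ring
    exact q2_not_mem hne hcomp heq (hq ▸ himg _ hp2K)
  · exact absurd (hinj (h0.trans h4.symm)) d04
  · exfalso
    have hpe : ((5/2 : ℂ)) = (5/8 : ℝ)•(4:ℂ) + (0 : ℝ)•Bv := by
      rw [Bv]; simp only [Complex.real_smul]; push_cast; ring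
    have hq : f ((5/2 : ℂ)) = (3/2 : ℂ) := by
      rw [hpe, hlin, h0, hB, h4, Bv]
      simp only [Complex.real_smul]; push_cast; ring
    exact q4_not_mem hne hcomp heq (hq ▸ himg _ hp3K)
  · exact absurd (hinj (hB.trans h4.symm)) dB4
  · exact absurd (hinj (h0.trans h4.symm)) d04
  · exact absurd (hinj (h0.trans hB.symm)) d0B
  · exact absurd (hinj (h0.trans hB.symm)) d0B
  · exact absurd (hinj (h0.trans hB.symm)) d0B
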